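/- Let μ be a probability measure on ℝ^P supported in (0,∞)^P, and for t ∈ ℝ^P with all t_p ≤ 0 let M_μ(t) = ∫ e^(Σ_{p=1}^P t_p·β_p) dμ(β) (this integral is finite). Assume Σ_{k ∈ ℕ^M} M_μ(−K_1(k), …, −K_P(k)) < ∞. Then ∫ [∏_{m=1}^M e^(−y_m·(X_m·β)) / (1 + e^(−(X_m·β)))] dμ(β) = Σ_{k ∈ ℕ^M} (−1)^{|k|} · M_μ(−K_1(k), …, −K_P(k)). -/

import Mathlib

open MeasureTheory

lemma tsum_pi_prod : ∀ (M : ℕ) (f : Fin M → ℕ → ℝ), (∀ m, Summable fun n => ‖f m n‖) →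
    Summable (fun k : Fin M → ℕ => ‖∏ m, f m (k m)‖) ∧
    ∑' k : Fin M → ℕ, ∏ m, f m (k m) = ∏ m, ∑' n, f m n := by
  intro M
  induction M with
  | zero =>
    intro f hf
    refine ⟨.of_finite, by simp⟩
  | succ n ih =>
    intro f hf
    obtain ⟨hs, he⟩ := ih (fun i => f i.succ) (fun i => hf i.succ)
    set G : (Fin n → ℕ) → ℝ := fun k => ∏ i, f i.succ (k i) with hG
    have hs' : Summable fun k => ‖G k‖ := hs
    have hmul : Summable fun z : ℕ × (Fin n → ℕ) => ‖f 0 z.1 * G z.2‖ := (hf 0).mul_norm hs'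
    have key : ∀ z : ℕ × (Fin n → ℕ),
        (∏ m, f m (Fin.consEquiv (fun _ => ℕ) z m)) = f 0 z.1 * G z.2 := by
      intro z
      have hz : (Fin.consEquiv (fun _ => ℕ) z : Fin (n+1) → ℕ) = Fin.cons z.1 z.2 := rfl
      rw [hz, Fin.prod_univ_succ, hG]
      simp
    have hsum1 : Summable (fun k : Fin (n+1) → ℕ => ‖∏ m, f m (k m)‖) := by
      rw [← (Fin.consEquiv (fun _ => ℕ)).summable_iff]
      refine (summable_congr ?_).mpr hmul
      intro z
      simp only [Function.comp_apply, key z]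
    refine ⟨hsum1, ?_⟩
    rw [← (Fin.consEquiv (fun _ => ℕ)).tsum_eq]
    calc ∑' z : ℕ × (Fin n → ℕ), ∏ m, f m (Fin.consEquiv (fun _ => ℕ) z m)
        = ∑' z : ℕ × (Fin n → ℕ), f 0 z.1 * G z.2 := tsum_congr key
      _ = (∑' j, f 0 j) * ∑' k, G k :=
          (tsum_mul_tsum_of_summable_norm (hf 0) hs').symm
      _ = ∏ m, ∑' j, f m j := by rw [hG] at he ⊢; rw [he, Fin.prod_univ_succ]

lemma geom_logit (s : ℝ) (hs : 0 < s) (yv : ℝ) :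
    Summable (fun j : ℕ => ‖(-1:ℝ)^j * Real.exp (-((yv + j) * s))‖) ∧
    ∑' j : ℕ, (-1:ℝ)^j * Real.exp (-((yv + j) * s))
      = Real.exp (-(yv * s)) / (1 + Real.exp (-s)) := by
  have ha : Real.exp (-s) < 1 := Real.exp_lt_one_iff.mpr (by linarith)
  have ha0 : 0 < Real.exp (-s) := Real.exp_pos _
  have hterm : ∀ j : ℕ, (-1:ℝ)^j * Real.exp (-((yv + j) * s))
      = Real.exp (-(yv * s)) * (-Real.exp (-s))^j := by
    intro j
    have h2 : Real.exp (-((yv + j) * s)) = Real.exp (-(yv * s)) * Real.exp (↑j * -s) := by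
      rw [← Real.exp_add]; ring_nf
    rw [neg_pow (Real.exp (-s)), h2, ← Real.exp_nat_mul]
    ring
  constructor
  · have hgs : Summable (fun j : ℕ => Real.exp (-(yv * s)) * Real.exp (-s) ^ j) :=
      (summable_geometric_of_lt_one ha0.le ha).mul_left _
    refine hgs.congr fun j => ?_
    rw [hterm j]
    simp [Real.norm_eq_abs, abs_mul, abs_pow, abs_of_pos ha0,
      abs_of_pos (Real.exp_pos (-(yv * s)))]
  · calc ∑' j : ℕ, (-1:ℝ)^j * Real.exp (-((yv + j) * s))
        = ∑' j : ℕ, Real.exp (-(yv * s)) * (-Real.exp (-s))^j := tsum_congr hterm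
      _ = Real.exp (-(yv * s)) * ∑' j : ℕ, (-Real.exp (-s))^j := by
          rw [tsum_mul_left]
      _ = Real.exp (-(yv * s)) * (1 - (-Real.exp (-s)))⁻¹ := by
          rw [tsum_geometric_of_abs_lt_one (by rw [abs_neg, abs_of_pos ha0]; exact ha)]
      _ = Real.exp (-(yv * s)) / (1 + Real.exp (-s)) := by
          rw [sub_neg_eq_add, div_eq_mul_inv]

/-- `K_p(k) = Σ_m (y_m + k_m)·x_{m,p}` -/
noncomputable def Kcoef {M P : ℕ} (x : Fin M → Fin P → ℝ) (y : Fin M → ℝ)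
    (k : Fin M → ℕ) (p : Fin P) : ℝ :=
  ∑ m, (y m + k m) * x m p

/-- Theorem 4 of the paper: the marginalized logit likelihood against any probability
distribution `μ` supported in `(0,∞)^P` is given by an alternating series of evaluations
of the moment generating function `M_μ(t) = ∫ e^(Σ_p t_p β_p) dμ(β)` of `μ` at the
nonpositive points `(−K_1(k), …, −K_P(k))`. -/
theorem integral_logit_eq_tsum_mgf (M P : ℕ) (hM : 1 ≤ M) (hP : 1 ≤ P)
    (x : Fin M → Fin P → ℝ) (hx : ∀ m p, 0 ≤ x m p) (hx' : ∀ m, ∃ p, 0 < x m p)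
    (y : Fin M → ℝ) (hy : ∀ m, y m = 0 ∨ y m = 1)
    (μ : Measure (Fin P → ℝ)) [IsProbabilityMeasure μ]
    (hsupp : μ {β | ∀ p, 0 < β p}ᶜ = 0)
    (hsum : Summable fun k : Fin M → ℕ =>
      ∫ β, Real.exp (∑ p, -Kcoef x y k p * β p) ∂μ) :
    (∀ t : Fin P → ℝ, (∀ p, t p ≤ 0) →
      Integrable (fun β => Real.exp (∑ p, t p * β p)) μ) ∧
    ∫ β, ∏ m, Real.exp (-(y m * ∑ p, x m p * β p)) /
        (1 + Real.exp (-(∑ p, x m p * β p))) ∂μ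
      = ∑' k : Fin M → ℕ,
          (-1 : ℝ) ^ (∑ m, k m) * ∫ β, Real.exp (∑ p, -Kcoef x y k p * β p) ∂μ := by
  have hae : ∀ᵐ β ∂μ, ∀ p, 0 < β p := by
    rw [ae_iff]
    simpa [Set.compl_setOf] using hsupp
  have part1 : ∀ t : Fin P → ℝ, (∀ p, t p ≤ 0) →
      Integrable (fun β => Real.exp (∑ p, t p * β p)) μ := by
    intro t ht
    have hcont : Continuous fun β : Fin P → ℝ => Real.exp (∑ p, t p * β p) :=
      Real.continuous_exp.comp (continuous_finset_sum _ fun p _ =>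
        continuous_const.mul (continuous_apply p))
    refine Integrable.mono' (integrable_const 1) hcont.aestronglyMeasurable ?_
    filter_upwards [hae] with β hβ
    rw [Real.norm_eq_abs, abs_of_pos (Real.exp_pos _)]
    refine Real.exp_le_one_iff.mpr (Finset.sum_nonpos fun p _ => ?_)
    exact mul_nonpos_iff.mpr (Or.inr ⟨ht p, (hβ p).le⟩)
  refine ⟨part1, ?_⟩
  have hy0 : ∀ m, 0 ≤ y m := fun m => by rcases hy m with h | h <;> rw [h] <;> norm_num
  have hK : ∀ (k : Fin M → ℕ) p, 0 ≤ Kcoef x y k p := fun k p =>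
    Finset.sum_nonneg fun m _ =>
      mul_nonneg (add_nonneg (hy0 m) (Nat.cast_nonneg _)) (hx m p)
  have hInt : ∀ k : Fin M → ℕ,
      Integrable (fun β => Real.exp (∑ p, -Kcoef x y k p * β p)) μ := fun k =>
    part1 _ fun p => neg_nonpos.mpr (hK k p)
  have hsum_eq : ∀ (k : Fin M → ℕ) (β : Fin P → ℝ),
      (∑ p, -Kcoef x y k p * β p) = ∑ m, -((y m + k m) * ∑ p, x m p * β p) := by
    intro k β
    have h1 : ∀ p, -Kcoef x y k p * β p = ∑ m, -((y m + k m) * (x m p * β p)) := by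
      intro p
      rw [Kcoef, neg_mul, Finset.sum_mul, ← Finset.sum_neg_distrib]
      exact Finset.sum_congr rfl fun m _ => by ring
    rw [Finset.sum_congr rfl fun p _ => h1 p, Finset.sum_comm]
    refine Finset.sum_congr rfl fun m _ => ?_
    rw [Finset.mul_sum, ← Finset.sum_neg_distrib]
  -- pointwise identity on the support
  have hpt : ∀ β : Fin P → ℝ, (∀ p, 0 < β p) →
      (∏ m, Real.exp (-(y m * ∑ p, x m p * β p)) /
        (1 + Real.exp (-(∑ p, x m p * β p))))
      = ∑' k : Fin M → ℕ,
          (-1 : ℝ) ^ (∑ m, k m) * Real.exp (∑ p, -Kcoef x y k p * β p) := by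
    intro β hβ
    have hSpos : ∀ m, 0 < ∑ p, x m p * β p := by
      intro m
      obtain ⟨p, hp⟩ := hx' m
      exact Finset.sum_pos' (fun q _ => mul_nonneg (hx m q) (hβ q).le)
        ⟨p, Finset.mem_univ p, mul_pos hp (hβ p)⟩
    set f : Fin M → ℕ → ℝ :=
      fun m j => (-1:ℝ)^j * Real.exp (-((y m + j) * ∑ p, x m p * β p)) with hf
    have hfs : ∀ m, Summable fun j => ‖f m j‖ := fun m =>
      (geom_logit _ (hSpos m) (y m)).1
    obtain ⟨hFs, hFe⟩ := tsum_pi_prod M f hfs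
    calc (∏ m, Real.exp (-(y m * ∑ p, x m p * β p)) /
            (1 + Real.exp (-(∑ p, x m p * β p))))
        = ∏ m, ∑' j, f m j :=
          Finset.prod_congr rfl fun m _ => ((geom_logit _ (hSpos m) (y m)).2).symm
      _ = ∑' k : Fin M → ℕ, ∏ m, f m (k m) := hFe.symm
      _ = ∑' k : Fin M → ℕ,
            (-1 : ℝ) ^ (∑ m, k m) * Real.exp (∑ p, -Kcoef x y k p * β p) := by
          refine tsum_congr fun k => ?_
          rw [hf]
          simp only []
          rw [Finset.prod_mul_distrib, Finset.prod_pow_eq_pow_sum, ← Real.exp_sum,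
            hsum_eq k β]
  -- swap integral and sum
  have hmeas : ∀ k : Fin M → ℕ, AEStronglyMeasurable
      (fun β : Fin P → ℝ =>
        (-1 : ℝ) ^ (∑ m, k m) * Real.exp (∑ p, -Kcoef x y k p * β p)) μ := by
    intro k
    exact (continuous_const.mul (Real.continuous_exp.comp
      (continuous_finset_sum _ fun p _ =>
        continuous_const.mul (continuous_apply p)))).aestronglyMeasurable
  have hIk : ∀ k : Fin M → ℕ, 0 ≤ ∫ β, Real.exp (∑ p, -Kcoef x y k p * β p) ∂μ :=
    fun k => integral_nonneg fun β => (Real.exp_pos _).le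
  have hlin : (∑' k : Fin M → ℕ, ∫⁻ β,
      ‖(-1 : ℝ) ^ (∑ m, k m) * Real.exp (∑ p, -Kcoef x y k p * β p)‖₊ ∂μ) ≠ ⊤ := by
    have heq : ∀ k : Fin M → ℕ, (∫⁻ β,
        ‖(-1 : ℝ) ^ (∑ m, k m) * Real.exp (∑ p, -Kcoef x y k p * β p)‖₊ ∂μ)
        = ENNReal.ofReal (∫ β, Real.exp (∑ p, -Kcoef x y k p * β p) ∂μ) := by
      intro k
      rw [ofReal_integral_eq_lintegral_ofReal (hInt k)
        (Filter.Eventually.of_forall fun β => (Real.exp_pos _).le)]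
      refine lintegral_congr fun β => ?_
      rw [← enorm_eq_nnnorm, ← ofReal_norm]
      congr 1
      simp [Real.norm_eq_abs, abs_mul, abs_pow, abs_of_pos (Real.exp_pos _)]
    rw [tsum_congr heq, ← ENNReal.ofReal_tsum_of_nonneg hIk hsum]
    exact ENNReal.ofReal_ne_top
  calc ∫ β, ∏ m, Real.exp (-(y m * ∑ p, x m p * β p)) /
          (1 + Real.exp (-(∑ p, x m p * β p))) ∂μ
      = ∫ β, ∑' k : Fin M → ℕ,
          (-1 : ℝ) ^ (∑ m, k m) * Real.exp (∑ p, -Kcoef x y k p * β p) ∂μ := by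
        refine integral_congr_ae ?_
        filter_upwards [hae] with β hβ using hpt β hβ
    _ = ∑' k : Fin M → ℕ, ∫ β,
          (-1 : ℝ) ^ (∑ m, k m) * Real.exp (∑ p, -Kcoef x y k p * β p) ∂μ :=
        integral_tsum hmeas hlin
    _ = ∑' k : Fin M → ℕ,
          (-1 : ℝ) ^ (∑ m, k m) * ∫ β, Real.exp (∑ p, -Kcoef x y k p * β p) ∂μ :=
        tsum_congr fun k => integral_const_mul _ _
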